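/- Let P ∈ ℝ^{n×n} be symmetric positive definite, Σ ∈ ℝ^{n×n}, and ε, ϑ > 0 with Σ + Σᵀ + ϑ·I ⪯ -ε·P⁻¹. Let B ∈ ℝ^{n×m}. Then for all z ∈ ℝⁿ and v ∈ ℝᵐ: 2·zᵀ P Σ P z + 2·zᵀ P B v ≤ -ε·zᵀ P z + (‖B‖²/ϑ)·|v|². -/

import Mathlib

open Matrix

/-- The induced 2-norm (operator norm) of a real matrix. -/
noncomputable def l2OpNorm {n m : ℕ} (B : Matrix (Fin n) (Fin m) ℝ) : ℝ :=
  ‖(Matrix.toEuclideanLin B).toContinuousLinearMap‖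

/-- key dissipation inequality of Theorem 2: if
`Σ + Σᵀ + ϑ I ⪯ -ε P⁻¹` with `P` symmetric positive definite, then
`2 zᵀ P Σ P z + 2 zᵀ P B v ≤ -ε zᵀ P z + (‖B‖²/ϑ) |v|²`. -/
theorem stmt_10 {n m : ℕ} (P S : Matrix (Fin n) (Fin n) ℝ)
    (hP : P.PosDef) (hPsymm : P.IsSymm) (ε ϑ : ℝ) (hε : 0 < ε) (hϑ : 0 < ϑ)
    (hLoewner : ((-ε) • P⁻¹ - (S + Sᵀ + ϑ • (1 : Matrix (Fin n) (Fin n) ℝ))).PosSemidef)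
    (B : Matrix (Fin n) (Fin m) ℝ) :
    ∀ (z : Fin n → ℝ) (v : Fin m → ℝ),
      2 * (z ⬝ᵥ (P *ᵥ (S *ᵥ (P *ᵥ z)))) + 2 * (z ⬝ᵥ (P *ᵥ (B *ᵥ v)))
        ≤ -ε * (z ⬝ᵥ (P *ᵥ z)) + (l2OpNorm B ^ 2 / ϑ) * (v ⬝ᵥ v) := by
  intro z v
  set w := P *ᵥ z with hw
  have hvm : z ᵥ* P = w := by rw [← hPsymm, Matrix.vecMul_transpose]
  have hzPu : ∀ u : Fin n → ℝ, z ⬝ᵥ (P *ᵥ u) = w ⬝ᵥ u := by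
    intro u; rw [Matrix.dotProduct_mulVec, hvm]
  have hinv : P⁻¹ *ᵥ w = z := by
    rw [hw, Matrix.mulVec_mulVec, Matrix.nonsing_inv_mul _ hP.det_pos.ne'.isUnit,
      Matrix.one_mulVec]
  have hPinv : w ⬝ᵥ (P⁻¹ *ᵥ w) = z ⬝ᵥ (P *ᵥ z) := by
    rw [hinv, dotProduct_comm, ← hw, hzPu]
  have hST : w ⬝ᵥ (Sᵀ *ᵥ w) = w ⬝ᵥ (S *ᵥ w) :=
    (Matrix.dotProduct_mulVec _ _ _).trans
      (by rw [Matrix.vecMul_transpose]; exact dotProduct_comm _ _)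
  -- Loewner inequality
  have key := hLoewner.dotProduct_mulVec_nonneg w
  simp only [star_trivial, Matrix.sub_mulVec, Matrix.add_mulVec, Matrix.smul_mulVec,
    Matrix.one_mulVec, dotProduct_sub, dotProduct_add, dotProduct_smul,
    smul_eq_mul] at key
  rw [hPinv, hST] at key
  -- cross-term bound
  have hcross : 2 * (w ⬝ᵥ (B *ᵥ v)) ≤ ϑ * (w ⬝ᵥ w) + (l2OpNorm B ^ 2 / ϑ) * (v ⬝ᵥ v) := by
    set f := (Matrix.toEuclideanLin B).toContinuousLinearMap with hf
    set v' : EuclideanSpace ℝ (Fin m) := (WithLp.equiv 2 (Fin m → ℝ)).symm v with hv'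
    set w' : EuclideanSpace ℝ (Fin n) := (WithLp.equiv 2 (Fin n → ℝ)).symm w with hw'
    have hfv : f v' = (WithLp.equiv 2 (Fin n → ℝ)).symm (B *ᵥ v) := by
      simp [hf, hv', Matrix.toEuclideanLin_apply_piLp_toLp]
    have h1 : w ⬝ᵥ (B *ᵥ v) = inner ℝ w' (f v') := by
      rw [hfv]
      simp [PiLp.inner_apply, hw', dotProduct, mul_comm]
    have h2 : inner ℝ w' (f v') ≤ ‖w'‖ * (l2OpNorm B * ‖v'‖) := by
      refine (real_inner_le_norm _ _).trans ?_
      exact mul_le_mul_of_nonneg_left (f.le_opNorm v') (norm_nonneg _)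
    have h3 : w ⬝ᵥ w = ‖w'‖ ^ 2 := by
      rw [← real_inner_self_eq_norm_sq]
      simp only [PiLp.inner_apply, hw', dotProduct, WithLp.equiv_symm_apply, RCLike.inner_apply, conj_trivial]
    have h4 : v ⬝ᵥ v = ‖v'‖ ^ 2 := by
      rw [← real_inner_self_eq_norm_sq]
      simp only [PiLp.inner_apply, hv', dotProduct, WithLp.equiv_symm_apply, RCLike.inner_apply, conj_trivial]
    rw [h3, h4]
    have hB : (0:ℝ) ≤ l2OpNorm B := norm_nonneg _
    have hd : ϑ * (l2OpNorm B ^ 2 / ϑ) = l2OpNorm B ^ 2 := by field_simp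
    nlinarith [h1, h2, norm_nonneg w', norm_nonneg v',
      sq_nonneg (ϑ * ‖w'‖ - l2OpNorm B * ‖v'‖), mul_pos hϑ hϑ]
  have h2S : 2 * (z ⬝ᵥ (P *ᵥ (S *ᵥ w))) = w ⬝ᵥ (S *ᵥ w) + w ⬝ᵥ (S *ᵥ w) := by
    rw [hzPu]; ring
  rw [hzPu (B *ᵥ v), hzPu (S *ᵥ w)]
  linarith [key, hcross]
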